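/- Let Σ be a finite alphabet and let x, y be nonempty words over Σ. The language L_{x=y} = {z ∈ Σ* : |z|_x = |z|_y} is finite if and only if |Σ| = 1 and x ≠ y. -/

import Mathlib

set_option linter.unusedSectionVars false

/-- Number of (possibly overlapping) occurrences of `x` as a contiguous
subword (factor) of `z`. -/
def occCount {α : Type*} [DecidableEq α] (x z : List α) : ℕ :=
  ((List.range (z.length + 1)).filter (fun i => decide (x <+: z.drop i))).length

/-- `wpow w n` is the word `w` concatenated with itself `n` times. -/
def wpow {α : Type*} (w : List α) (n : ℕ) : List α := (List.replicate n w).flatten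

/-- `z` is `y`-bordered: `z ≠ y` and `y` is both a prefix and a suffix of `z`. -/
def IsBordered {α : Type*} (y z : List α) : Prop := z ≠ y ∧ y <+: z ∧ y <:+ z

/-- `x` is interlaced by `y`: `y` is a subword (factor) of every `x`-bordered word. -/
def InterlacedBy {α : Type*} (x y : List α) : Prop :=
  ∀ z : List α, IsBordered x z → y <:+: z

section Helpers

lemma length_filter_range_lt (m N : ℕ) :
    ((List.range N).filter (fun i => decide (i < m))).length = min m N := by
  induction N with
  | zero => simp
  | succ N ih =>
    rw [List.range_succ, List.filter_append, List.length_append, ih]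
    by_cases h : N < m <;> simp [h] <;> omega

lemma prefix_replicate_iff {α : Type*} (a : α) (p m : ℕ) :
    List.replicate p a <+: List.replicate m a ↔ p ≤ m := by
  constructor
  · intro h; simpa using h.length_le
  · intro h
    exact ⟨List.replicate (m - p) a, by rw [← List.replicate_add]; congr 1; omega⟩

lemma occCount_replicate {α : Type*} [DecidableEq α] (a : α) (p n : ℕ) (hp : 0 < p) :
    occCount (List.replicate p a) (List.replicate n a) = n + 1 - p := by
  unfold occCount
  rw [List.length_replicate]
  rw [List.filter_congr (q := fun i => decide (i < n + 1 - p)) ?_]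
  · rw [length_filter_range_lt]; omega
  · intro i hi
    rw [List.mem_range] at hi
    simp only [List.drop_replicate, prefix_replicate_iff, decide_eq_decide]
    omega

lemma occCount_nil {α : Type*} [DecidableEq α] (x : List α) (hx : x ≠ []) :
    occCount x ([] : List α) = 0 := by
  unfold occCount
  simp [List.range_succ, hx]

lemma occCount_replicate_zero {α : Type*} [DecidableEq α] {x : List α} (c : α)
    (hxc : x ≠ List.replicate x.length c) (n : ℕ) :
    occCount x (List.replicate n c) = 0 := by
  unfold occCount
  rw [List.length_eq_zero_iff]
  rw [List.filter_eq_nil_iff]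
  intro i _
  simp only [decide_eq_true_eq]
  intro h
  rw [List.drop_replicate] at h
  exact hxc (List.eq_replicate_length.mpr (fun b hb => by
    have := h.subset hb
    exact List.eq_of_mem_replicate this))

lemma occCount_append {α : Type*} [DecidableEq α] (x u t : List α) :
    occCount x (u ++ t) =
      ((List.range u.length).filter (fun i => decide (x <+: (u ++ t).drop i))).length
        + occCount x t := by
  unfold occCount
  have h1 : (u ++ t).length + 1 = u.length + (t.length + 1) := by
    rw [List.length_append]; omega
  rw [h1, List.range_add, List.filter_append, List.length_append]
  congr 1
  rw [← List.countP_eq_length_filter, List.countP_map, ← List.countP_eq_length_filter]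
  apply List.countP_congr
  intro i _
  simp [Function.comp_apply, List.drop_append, List.drop_of_length_le (Nat.le_add_right u.length _)]

lemma length_filter_range_single {L i₀ : ℕ} (h₀ : i₀ < L) (P : ℕ → Bool)
    (h : ∀ i < L, (P i = true ↔ i = i₀)) :
    ((List.range L).filter P).length = 1 := by
  have he : (List.range L).filter P = (List.range L).filter (fun i => i == i₀) := by
    apply List.filter_congr
    intro i hi
    rw [List.mem_range] at hi
    rw [Bool.eq_iff_iff, h i hi, beq_iff_eq]
  rw [he]
  have hc : ∀ N : ℕ, ((List.range N).filter (fun i => i == i₀)).length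
      = if i₀ < N then 1 else 0 := by
    intro N
    induction N with
    | zero => simp
    | succ N ih =>
      rw [List.range_succ, List.filter_append, List.length_append, ih]
      by_cases hc : N = i₀ <;> simp [hc] <;> split_ifs <;> omega
  rw [hc, if_pos h₀]

lemma getElem?_of_prefix_replicate {α : Type*} {s : List α} {m : ℕ} {c : α}
    (hs : List.replicate m c <+: s) {j : ℕ} (hj : j < m) : s[j]? = some c := by
  obtain ⟨r, hr⟩ := hs
  rw [← hr, List.getElem?_append_left (by simpa using hj), List.getElem?_replicate, if_pos hj]

variable {α : Type*} [DecidableEq α] {a b : α} (hab : a ≠ b) (p q : ℕ) (t : List α)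

lemma val_lo (k : ℕ) (hk : k < p) :
    ((List.replicate p a ++ List.replicate q b) ++ t)[k]? = some a := by
  rw [List.getElem?_append_left (by simp; omega), List.getElem?_append_left (by simpa using hk),
    List.getElem?_replicate, if_pos hk]

lemma val_mid (k : ℕ) (h1 : p ≤ k) (h2 : k < p + q) :
    ((List.replicate p a ++ List.replicate q b) ++ t)[k]? = some b := by
  rw [List.append_assoc, List.getElem?_append_right (by simpa using h1),
    List.getElem?_append_left (by simp; omega), List.getElem?_replicate, if_pos (by simp; omega)]

lemma val_hi : ((List.replicate p a ++ List.replicate q b) ++ t)[p + q]? = t[0]? := by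
  rw [List.getElem?_append_right (by simp)]
  congr 1
  simp

include hab in
lemma no_occ_A (hp : 0 < p) (hq : 0 < q) (i : ℕ) (h1 : 0 < i) (h2 : i < p + q)
    (hpre : List.replicate p a <+:
      ((List.replicate p a ++ List.replicate q b) ++ t).drop i) : False := by
  rcases le_or_gt i p with hip | hip
  · have e1 := getElem?_of_prefix_replicate hpre (j := p - i) (by omega)
    rw [List.getElem?_drop, show i + (p - i) = p by omega] at e1
    have e2 := val_mid (a := a) (b := b) p q t p le_rfl (by omega)
    rw [e1] at e2
    exact hab (Option.some.inj e2)
  · have e1 := getElem?_of_prefix_replicate hpre (j := 0) hp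
    rw [List.getElem?_drop, Nat.add_zero] at e1
    have e2 := val_mid (a := a) (b := b) p q t i (by omega) h2
    rw [e1] at e2
    exact hab (Option.some.inj e2)

include hab in
lemma no_occ_B (hq : 0 < q) (ht : ∀ h : 0 < t.length, t[0] = a) (i : ℕ) (hne : i ≠ p)
    (h2 : i < p + q)
    (hpre : List.replicate q b <+:
      ((List.replicate p a ++ List.replicate q b) ++ t).drop i) : False := by
  rcases lt_or_gt_of_ne hne with hip | hip
  · have e1 := getElem?_of_prefix_replicate hpre (j := 0) hq
    rw [List.getElem?_drop, Nat.add_zero] at e1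
    have e2 := val_lo (a := a) (b := b) p q t i hip
    rw [e1] at e2
    exact hab (Option.some.inj e2).symm
  · have e1 := getElem?_of_prefix_replicate hpre (j := p + q - i) (by omega)
    rw [List.getElem?_drop, show i + (p + q - i) = p + q by omega,
      val_hi (a := a) (b := b) p q t] at e1
    rcases Nat.eq_zero_or_pos t.length with h0 | h0
    · rw [List.getElem?_eq_none (by omega)] at e1
      cases e1
    · rw [List.getElem?_eq_getElem h0, ht h0] at e1
      exact hab (Option.some.inj e1)

include hab in
lemma occ_step (hp : 0 < p) (hq : 0 < q) (ht : ∀ h : 0 < t.length, t[0] = a) :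
    occCount (List.replicate p a) ((List.replicate p a ++ List.replicate q b) ++ t)
        = 1 + occCount (List.replicate p a) t ∧
      occCount (List.replicate q b) ((List.replicate p a ++ List.replicate q b) ++ t)
        = 1 + occCount (List.replicate q b) t := by
  constructor
  · rw [occCount_append]
    congr 1
    rw [List.length_append, List.length_replicate, List.length_replicate]
    apply length_filter_range_single (i₀ := 0) (by omega)
    intro i hi
    simp only [decide_eq_true_eq]
    constructor
    · intro hpre
      by_contra hne
      exact no_occ_A hab p q t hp hq i (Nat.pos_of_ne_zero hne) hi hpre
    · rintro rfl
      rw [List.drop_zero, List.append_assoc]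
      exact ⟨List.replicate q b ++ t, rfl⟩
  · rw [occCount_append]
    congr 1
    rw [List.length_append, List.length_replicate, List.length_replicate]
    apply length_filter_range_single (i₀ := p) (by omega)
    intro i hi
    simp only [decide_eq_true_eq]
    constructor
    · intro hpre
      by_contra hne
      exact no_occ_B hab p q t hq ht i hne hi hpre
    · have hdrop : ((List.replicate p a ++ List.replicate q b) ++ t).drop p
          = List.replicate q b ++ t := by
        rw [List.append_assoc]
        have h : List.drop (List.replicate p a).length (List.replicate p a ++ (List.replicate q b ++ t))
            = List.replicate q b ++ t := List.drop_left
        rwa [List.length_replicate] at h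
      rintro rfl
      rw [hdrop]
      exact ⟨t, rfl⟩

lemma wpow_head (hp : 0 < p) (n : ℕ)
    (h : 0 < (wpow (List.replicate p a ++ List.replicate q b) n).length) :
    (wpow (List.replicate p a ++ List.replicate q b) n)[0] = a := by
  cases n with
  | zero => simp [wpow] at h
  | succ n =>
    have hw : wpow (List.replicate p a ++ List.replicate q b) (n+1)
        = (List.replicate p a ++ List.replicate q b)
          ++ wpow (List.replicate p a ++ List.replicate q b) n := by
      simp [wpow, List.replicate_succ]
    have h0 := val_lo (a := a) (b := b) p q
      (wpow (List.replicate p a ++ List.replicate q b) n) 0 hp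
    rw [← hw, List.getElem?_eq_getElem h] at h0
    exact Option.some.inj h0

include hab in
lemma occ_pow (hp : 0 < p) (hq : 0 < q) (n : ℕ) :
    occCount (List.replicate p a) (wpow (List.replicate p a ++ List.replicate q b) n) = n ∧
    occCount (List.replicate q b) (wpow (List.replicate p a ++ List.replicate q b) n) = n := by
  induction n with
  | zero =>
    constructor <;>
      exact occCount_nil _ (List.ne_nil_of_length_pos (by simp; omega))
  | succ n ih =>
    have hw : wpow (List.replicate p a ++ List.replicate q b) (n+1)
        = (List.replicate p a ++ List.replicate q b)
          ++ wpow (List.replicate p a ++ List.replicate q b) n := by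
      simp [wpow, List.replicate_succ]
    rw [hw]
    obtain ⟨s1, s2⟩ := occ_step hab p q _ hp hq (wpow_head p q hp n)
    rw [s1, s2, ih.1, ih.2]
    omega

end Helpers

theorem stmt_17 {α : Type} [Fintype α] [DecidableEq α] (x y : List α)
    (hx : x ≠ []) (hy : y ≠ []) :
    {z : List α | occCount x z = occCount y z}.Finite ↔
      (Fintype.card α = 1 ∧ x ≠ y) := by
  obtain ⟨a0, ha0⟩ := List.exists_mem_of_ne_nil x hx
  constructor
  · intro hfin
    by_contra hcon
    rw [not_and_or, not_not] at hcon
    have hinf : {z : List α | occCount x z = occCount y z}.Infinite := by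
      rcases hcon with hcard | hxy
      · -- card ≠ 1, hence ≥ 2
        have hpos : 0 < Fintype.card α := Fintype.card_pos_iff.mpr ⟨a0⟩
        have h2 : 1 < Fintype.card α := by omega
        by_cases hgood : ∃ c, x ≠ List.replicate x.length c ∧ y ≠ List.replicate y.length c
        · obtain ⟨c, hxc, hyc⟩ := hgood
          refine Set.infinite_of_injective_forall_mem
            (f := fun n : ℕ => List.replicate n c) ?_ ?_
          · intro m n h
            simpa using congrArg List.length h
          · intro n
            simp only [Set.mem_setOf_eq]
            rw [occCount_replicate_zero c hxc, occCount_replicate_zero c hyc]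
        · push_neg at hgood
          obtain ⟨a, b, hab⟩ := Fintype.exists_pair_of_one_lt_card h2
          obtain ⟨b0, hb0⟩ := List.exists_mem_of_ne_nil y hy
          have Ha : x = List.replicate x.length a ∨ y = List.replicate y.length a := by
            by_cases h : x = List.replicate x.length a
            · exact Or.inl h
            · exact Or.inr (hgood a h)
          have Hb : x = List.replicate x.length b ∨ y = List.replicate y.length b := by
            by_cases h : x = List.replicate x.length b
            · exact Or.inl h
            · exact Or.inr (hgood b h)
          have key : ∃ a b : α, a ≠ b ∧ x = List.replicate x.length a
              ∧ y = List.replicate y.length b := by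
            rcases Ha with ha | ha <;> rcases Hb with hb | hb
            · exfalso
              apply hab
              have h1 : a0 ∈ List.replicate x.length a := ha ▸ ha0
              have h2' : a0 ∈ List.replicate x.length b := hb ▸ ha0
              rw [List.eq_of_mem_replicate h1] at h2'
              exact List.eq_of_mem_replicate h2'
            · exact ⟨a, b, hab, ha, hb⟩
            · exact ⟨b, a, hab.symm, hb, ha⟩
            · exfalso
              apply hab
              have h1 : b0 ∈ List.replicate y.length a := ha ▸ hb0
              have h2' : b0 ∈ List.replicate y.length b := hb ▸ hb0
              rw [List.eq_of_mem_replicate h1] at h2'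
              exact List.eq_of_mem_replicate h2'
          obtain ⟨a, b, hab', hxa, hyb⟩ := key
          have hp : 0 < x.length := List.length_pos_iff.mpr hx
          have hq : 0 < y.length := List.length_pos_iff.mpr hy
          have hlen : ∀ n : ℕ,
              (wpow (List.replicate x.length a ++ List.replicate y.length b) n).length
                = n * (x.length + y.length) := by
            intro n
            simp [wpow, List.length_flatten, List.map_replicate, List.sum_replicate,
              smul_eq_mul, List.length_append, mul_comm]
          refine Set.infinite_of_injective_forall_mem
            (f := fun n : ℕ =>
              wpow (List.replicate x.length a ++ List.replicate y.length b) n) ?_ ?_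
          · intro m n h
            have := congrArg List.length h
            simp only [hlen] at this
            have hpq : 0 < x.length + y.length := by omega
            exact Nat.eq_of_mul_eq_mul_right hpq this
          · intro n
            simp only [Set.mem_setOf_eq]
            obtain ⟨e1, e2⟩ := occ_pow hab' x.length y.length hp hq n
            have e1' : occCount x
                (wpow (List.replicate x.length a ++ List.replicate y.length b) n) = n := by
              nth_rewrite 1 [hxa]; exact e1
            have e2' : occCount y
                (wpow (List.replicate x.length a ++ List.replicate y.length b) n) = n := by
              nth_rewrite 1 [hyb]; exact e2
            rw [e1', e2']
      · -- x = y
        refine Set.infinite_of_injective_forall_mem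
          (f := fun n : ℕ => List.replicate n a0) ?_ ?_
        · intro m n h
          simpa using congrArg List.length h
        · intro n
          simp only [Set.mem_setOf_eq, hxy]
    exact hinf hfin
  · rintro ⟨hcard, hxy⟩
    obtain ⟨a, ha⟩ := Fintype.card_eq_one_iff.mp hcard
    have hrep : ∀ z : List α, z = List.replicate z.length a := fun z =>
      List.eq_replicate_length.mpr (fun b _ => ha b)
    have hp : 0 < x.length := List.length_pos_iff.mpr hx
    have hq : 0 < y.length := List.length_pos_iff.mpr hy
    have hpq : x.length ≠ y.length := by
      intro h
      exact hxy (by rw [hrep x, hrep y, h])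
    apply Set.Finite.subset (List.finite_length_lt α (max x.length y.length))
    intro z hz
    simp only [Set.mem_setOf_eq] at hz ⊢
    have ex : occCount x z = z.length + 1 - x.length := by
      conv_lhs => rw [hrep x, hrep z]
      exact occCount_replicate a x.length z.length hp
    have ey : occCount y z = z.length + 1 - y.length := by
      conv_lhs => rw [hrep y, hrep z]
      exact occCount_replicate a y.length z.length hq
    rw [ex, ey] at hz
    omega
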